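/- arXiv:1612.01403 — 4 statements merged into one kernel-verified Lean document; each statement's English description precedes it below -/
import Mathlib

section
/- Let ρ_X be a probability density on ℝ^d and suppose ρ_Z = ψ(ρ_X) (i.e. ρ_Z is the true marginal of the measurements). Let π be a probability density on ℝ^d that is globally supported (π(x) > 0 for almost every x), suppose ψ(π)(z) > 0 for almost every z, and suppose all integrals below are finite. If (Ψπ)(x) = π(x) for almost every x ∈ ℝ^d, then ψ(π)(z) = ρ_Z(z) for almost every z ∈ ℝ^n. (Implication (ii) ⇒ (i) of the Proposition on fixed points of the prior iteration.) -/
open MeasureTheory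

section Aux

variable {d n : ℕ}

private lemma my_integrable_of_integral_one {f : (Fin d → ℝ) → ℝ} (h : (∫ x, f x) = 1) :
    Integrable f := by
  by_contra hc
  rw [integral_undef hc] at h
  exact one_ne_zero h.symm

private lemma key_prod_integrable
    (φ : (Fin d → ℝ) → (Fin n → ℝ)) (hφ : Measurable φ)
    (ρE : (Fin n → ℝ) → ℝ) (hρE_meas : Measurable ρE)
    (hρE_nonneg : ∀ e, 0 ≤ ρE e) (hρE_i : Integrable ρE) (hρE_int : (∫ e, ρE e) = 1)
    (p' : (Fin d → ℝ) → ℝ) (hm : Measurable p') (hnn : ∀ x, 0 ≤ p' x) (hi : Integrable p') :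
    Integrable (fun q : (Fin d → ℝ) × (Fin n → ℝ) => ρE (q.2 - φ q.1) * p' q.1)
      ((volume : Measure (Fin d → ℝ)).prod volume) := by
  have hmeas : Measurable fun q : (Fin d → ℝ) × (Fin n → ℝ) => ρE (q.2 - φ q.1) * p' q.1 :=
    (hρE_meas.comp (measurable_snd.sub (hφ.comp measurable_fst))).mul (hm.comp measurable_fst)
  refine (integrable_prod_iff hmeas.aestronglyMeasurable).2 ⟨?_, ?_⟩
  · exact Filter.Eventually.of_forall fun x =>
      (hρE_i.comp_sub_right (φ x)).mul_const (p' x)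
  · have heq : (fun x => ∫ z, ‖ρE (z - φ x) * p' x‖) = p' := by
      funext x
      have h1 : ∀ z : Fin n → ℝ, ‖ρE (z - φ x) * p' x‖ = ρE (z - φ x) * p' x := fun z => by
        rw [Real.norm_eq_abs, abs_of_nonneg (mul_nonneg (hρE_nonneg _) (hnn x))]
      simp_rw [h1]
      rw [integral_mul_const, integral_sub_right_eq_self ρE (φ x), hρE_int, one_mul]
    rw [heq]
    exact hi

private lemma key_marginal_int
    (φ : (Fin d → ℝ) → (Fin n → ℝ))
    (ρE : (Fin n → ℝ) → ℝ) (hρE_int : (∫ e, ρE e) = 1)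
    (p' : (Fin d → ℝ) → ℝ) (hp'_int : (∫ x, p' x) = 1)
    (hF : Integrable (fun q : (Fin d → ℝ) × (Fin n → ℝ) => ρE (q.2 - φ q.1) * p' q.1)
      ((volume : Measure (Fin d → ℝ)).prod volume)) :
    (∫ z, ∫ x, ρE (z - φ x) * p' x) = 1 := by
  have hswap := integral_integral_swap (f := fun (x : Fin d → ℝ) (z : Fin n → ℝ) =>
    ρE (z - φ x) * p' x) hF
  rw [← hswap]
  have h1 : ∀ x : Fin d → ℝ, (∫ z, ρE (z - φ x) * p' x) = p' x := fun x => by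
    rw [integral_mul_const, integral_sub_right_eq_self ρE (φ x), hρE_int, one_mul]
  simp_rw [h1]
  exact hp'_int

end Aux

/-- If `ρ_Z = ψ(ρ_X)` is the true marginal, `π` is a globally supported
probability density with `ψ π > 0` a.e. and `Ψ π = π` a.e. (and the relevant integrals
are finite), then `ψ π = ρ_Z` a.e. (implication (ii) ⇒ (i) of the Proposition). -/
theorem fixed_point_implies_marginal_eq {d n : ℕ}
    (φ : (Fin d → ℝ) → (Fin n → ℝ)) (hφ : Measurable φ)
    (ρE : (Fin n → ℝ) → ℝ) (hρE_meas : Measurable ρE)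
    (hρE_nonneg : ∀ e, 0 ≤ ρE e) (hρE_int : (∫ e, ρE e) = 1)
    (ρX : (Fin d → ℝ) → ℝ) (hρX_meas : Measurable ρX)
    (hρX_nonneg : ∀ x, 0 ≤ ρX x) (hρX_int : (∫ x, ρX x) = 1)
    (ψ : ((Fin d → ℝ) → ℝ) → (Fin n → ℝ) → ℝ)
    (hψ : ∀ p z, ψ p z = ∫ x, ρE (z - φ x) * p x)
    (ρZ : (Fin n → ℝ) → ℝ)
    (hρZ_eq : ∀ᵐ z ∂(volume : Measure (Fin n → ℝ)), ρZ z = ψ ρX z)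
    (π : (Fin d → ℝ) → ℝ) (hπ_meas : Measurable π)
    (hπ_nonneg : ∀ x, 0 ≤ π x) (hπ_int : (∫ x, π x) = 1)
    (hπ_pos : ∀ᵐ x ∂(volume : Measure (Fin d → ℝ)), 0 < π x)
    (hψπ_pos : ∀ᵐ z ∂(volume : Measure (Fin n → ℝ)), 0 < ψ π z)
    (hint1 : Integrable (fun z => (ψ π z - ρZ z) ^ 2 / ψ π z))
    (hint2 : Integrable (fun p : (Fin d → ℝ) × (Fin n → ℝ) =>
      |π p.1 - ρX p.1| * ρE (p.2 - φ p.1) * (|ψ π p.2 - ρZ p.2| / ψ π p.2)))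
    (Ψ : ((Fin d → ℝ) → ℝ) → (Fin d → ℝ) → ℝ)
    (hΨ : ∀ p x, Ψ p x = p x * ∫ z, (ρE (z - φ x) / ψ p z) * ρZ z)
    (hfix : ∀ᵐ x ∂(volume : Measure (Fin d → ℝ)), Ψ π x = π x) :
    ∀ᵐ z ∂(volume : Measure (Fin n → ℝ)), ψ π z = ρZ z := by
  classical
  have hρE_i : Integrable ρE := by
    by_contra hc; rw [integral_undef hc] at hρE_int; exact one_ne_zero hρE_int.symm
  have hπ_i : Integrable π := my_integrable_of_integral_one hπ_int
  have hρX_i : Integrable ρX := my_integrable_of_integral_one hρX_int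
  -- product integrability
  have hFπ := key_prod_integrable φ hφ ρE hρE_meas hρE_nonneg hρE_i hρE_int π hπ_meas
    hπ_nonneg hπ_i
  have hFX := key_prod_integrable φ hφ ρE hρE_meas hρE_nonneg hρE_i hρE_int ρX hρX_meas
    hρX_nonneg hρX_i
  -- measurability of marginals
  have hψπ_meas : Measurable (ψ π) := by
    have hsm : StronglyMeasurable (fun q : (Fin n → ℝ) × (Fin d → ℝ) =>
        ρE (q.1 - φ q.2) * π q.2) :=
      (((hρE_meas.comp (measurable_fst.sub (hφ.comp measurable_snd))).mul
        (hπ_meas.comp measurable_snd))).stronglyMeasurable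
    have := hsm.integral_prod_right' (ν := (volume : Measure (Fin d → ℝ)))
    have heq : ψ π = fun z => ∫ x, ρE (z - φ x) * π x := funext (hψ π)
    rw [heq]
    exact this.measurable
  have hψX_meas : Measurable (ψ ρX) := by
    have hsm : StronglyMeasurable (fun q : (Fin n → ℝ) × (Fin d → ℝ) =>
        ρE (q.1 - φ q.2) * ρX q.2) :=
      (((hρE_meas.comp (measurable_fst.sub (hφ.comp measurable_snd))).mul
        (hρX_meas.comp measurable_snd))).stronglyMeasurable
    have := hsm.integral_prod_right' (ν := (volume : Measure (Fin d → ℝ)))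
    have heq : ψ ρX = fun z => ∫ x, ρE (z - φ x) * ρX x := funext (hψ ρX)
    rw [heq]
    exact this.measurable
  -- integrability of marginals
  have hψπ_i : Integrable (ψ π) := by
    have := hFπ.integral_prod_right
    have heq : ψ π = fun z => ∫ x, ρE (z - φ x) * π x := funext (hψ π)
    rw [heq]; exact this
  have hψX_i : Integrable (ψ ρX) := by
    have := hFX.integral_prod_right
    have heq : ψ ρX = fun z => ∫ x, ρE (z - φ x) * ρX x := funext (hψ ρX)
    rw [heq]; exact this
  have hρZ_i : Integrable ρZ := hψX_i.congr (hρZ_eq.mono fun z hz => hz.symm)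
  -- total masses
  have hψπ_int : (∫ z, ψ π z) = 1 := by
    simp_rw [hψ π]
    exact key_marginal_int φ ρE hρE_int π hπ_int hFπ
  have hψX_int : (∫ z, ψ ρX z) = 1 := by
    simp_rw [hψ ρX]
    exact key_marginal_int φ ρE hρE_int ρX hρX_int hFX
  have hρZ_int : (∫ z, ρZ z) = 1 := by
    rw [integral_congr_ae hρZ_eq]; exact hψX_int
  -- a.e. sections integrable
  have hsecπ : ∀ᵐ z ∂(volume : Measure (Fin n → ℝ)),
      Integrable (fun x => ρE (z - φ x) * π x) := hFπ.prod_left_ae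
  have hsecX : ∀ᵐ z ∂(volume : Measure (Fin n → ℝ)),
      Integrable (fun x => ρE (z - φ x) * ρX x) := hFX.prod_left_ae
  -- fixed point identity
  have hI : ∀ᵐ x ∂(volume : Measure (Fin d → ℝ)),
      (∫ z, (ρE (z - φ x) / ψ π z) * ρZ z) = 1 := by
    filter_upwards [hfix, hπ_pos] with x h1 h2
    rw [hΨ] at h1
    exact mul_left_cancel₀ (ne_of_gt h2) (by rw [mul_one]; exact h1)
  -- define the measurable version H' on the product
  set H' : (Fin d → ℝ) × (Fin n → ℝ) → ℝ := fun q =>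
    (π q.1 - ρX q.1) * ((ρE (q.2 - φ q.1) / ψ π q.2) * ψ ρX q.2) with hH'def
  have hH'_meas : Measurable H' :=
    ((hπ_meas.comp measurable_fst).sub (hρX_meas.comp measurable_fst)).mul
      (((hρE_meas.comp (measurable_snd.sub (hφ.comp measurable_fst))).div
        (hψπ_meas.comp measurable_snd)).mul (hψX_meas.comp measurable_snd))
  -- lifted a.e. facts to the product
  have hq := Measure.quasiMeasurePreserving_snd
    (μ := (volume : Measure (Fin d → ℝ))) (ν := (volume : Measure (Fin n → ℝ)))
  have hlift : ∀ᵐ q : (Fin d → ℝ) × (Fin n → ℝ)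
      ∂((volume : Measure (Fin d → ℝ)).prod volume),
      0 < ψ π q.2 ∧ ρZ q.2 = ψ ρX q.2 :=
    hq.ae (hψπ_pos.and hρZ_eq)
  -- integrability of H'
  have hint2' : Integrable (fun q : (Fin d → ℝ) × (Fin n → ℝ) =>
      |π q.1 - ρX q.1| * ρE (q.2 - φ q.1) * (|ψ π q.2 - ρZ q.2| / ψ π q.2))
      ((volume : Measure (Fin d → ℝ)).prod volume) := by
    rw [← Measure.volume_eq_prod]; exact hint2
  have hB'_meas : Measurable (fun q : (Fin d → ℝ) × (Fin n → ℝ) =>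
      (π q.1 - ρX q.1) * ρE (q.2 - φ q.1) * ((ψ π q.2 - ψ ρX q.2) / ψ π q.2)) :=
    (((hπ_meas.comp measurable_fst).sub (hρX_meas.comp measurable_fst)).mul
      (hρE_meas.comp (measurable_snd.sub (hφ.comp measurable_fst)))).mul
      (((hψπ_meas.comp measurable_snd).sub (hψX_meas.comp measurable_snd)).div
        (hψπ_meas.comp measurable_snd))
  have hB'_i : Integrable (fun q : (Fin d → ℝ) × (Fin n → ℝ) =>
      (π q.1 - ρX q.1) * ρE (q.2 - φ q.1) * ((ψ π q.2 - ψ ρX q.2) / ψ π q.2))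
      ((volume : Measure (Fin d → ℝ)).prod volume) := by
    refine Integrable.mono' hint2' hB'_meas.aestronglyMeasurable ?_
    filter_upwards [hlift] with q hqf
    obtain ⟨hpos, hZX⟩ := hqf
    rw [Real.norm_eq_abs, ← hZX]
    rw [abs_mul, abs_mul, abs_of_nonneg (hρE_nonneg _), abs_div, abs_of_pos hpos]
  have hH'_i : Integrable H' ((volume : Measure (Fin d → ℝ)).prod volume) := by
    have hA_i : Integrable (fun q : (Fin d → ℝ) × (Fin n → ℝ) =>
        ρE (q.2 - φ q.1) * π q.1 - ρE (q.2 - φ q.1) * ρX q.1)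
        ((volume : Measure (Fin d → ℝ)).prod volume) := hFπ.sub hFX
    have := hA_i.sub hB'_i
    refine this.congr ?_
    filter_upwards [hlift] with q hqf
    obtain ⟨hpos, _⟩ := hqf
    have ha : ψ π q.2 ≠ 0 := ne_of_gt hpos
    simp only [Pi.sub_apply, hH'def]
    field_simp [hH'def]
    ring
  -- Fubini
  have hswap := integral_integral_swap (f := fun (x : Fin d → ℝ) (z : Fin n → ℝ) =>
    H' (x, z)) hH'_i
  -- LHS of the swap equals 0
  have hLHS : (∫ x, ∫ z, H' (x, z)) = 0 := by
    have h1 : ∀ᵐ x ∂(volume : Measure (Fin d → ℝ)),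
        (∫ z, H' (x, z)) = π x - ρX x := by
      filter_upwards [hI] with x hx
      have h2 : (∫ z, H' (x, z)) = (π x - ρX x) * ∫ z, (ρE (z - φ x) / ψ π z) * ψ ρX z := by
        simp only [hH'def]
        rw [integral_const_mul]
      rw [h2]
      have h3 : (∫ z, (ρE (z - φ x) / ψ π z) * ψ ρX z)
          = ∫ z, (ρE (z - φ x) / ψ π z) * ρZ z := by
        refine integral_congr_ae ?_
        filter_upwards [hρZ_eq] with z hz
        rw [hz]
      rw [h3, hx, mul_one]
    rw [integral_congr_ae h1, integral_sub hπ_i hρX_i, hπ_int, hρX_int, sub_self]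
  -- the inner z-integral function
  have hg1_i : Integrable (fun z => ∫ x, H' (x, z)) := by
    have := hH'_i.integral_prod_right
    exact this
  have hg1_int : (∫ z, ∫ x, H' (x, z)) = 0 := by rw [← hswap]; exact hLHS
  -- identify the inner integral a.e.
  have hg1G : ∀ᵐ z ∂(volume : Measure (Fin n → ℝ)),
      (∫ x, H' (x, z)) = (ψ π z - ρZ z) * ρZ z / ψ π z := by
    filter_upwards [hψπ_pos, hρZ_eq, hsecπ, hsecX] with z hpos hZX hiπ hiX
    have hfe : (fun x => H' (x, z)) = fun x =>
        (ρE (z - φ x) * π x) * (ψ ρX z / ψ π z)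
          - (ρE (z - φ x) * ρX x) * (ψ ρX z / ψ π z) := by
      funext x
      simp only [hH'def]
      ring
    rw [hfe, integral_sub (hiπ.mul_const _) (hiX.mul_const _),
      integral_mul_const, integral_mul_const, ← sub_mul, ← hψ π, ← hψ ρX, ← hZX,
      mul_div_assoc]
  have hG_i : Integrable (fun z => (ψ π z - ρZ z) * ρZ z / ψ π z) := hg1_i.congr hg1G
  have hG_int : (∫ z, (ψ π z - ρZ z) * ρZ z / ψ π z) = 0 := by
    rw [← integral_congr_ae hg1G]; exact hg1_int
  -- main computation
  have hkey : (∫ z, (ψ π z - ρZ z) ^ 2 / ψ π z) = 0 := by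
    have hid : ∀ᵐ z ∂(volume : Measure (Fin n → ℝ)),
        (ψ π z - ρZ z) ^ 2 / ψ π z
          = (ψ π z - ρZ z) - (ψ π z - ρZ z) * ρZ z / ψ π z := by
      filter_upwards [hψπ_pos] with z hpos
      have ha : ψ π z ≠ 0 := ne_of_gt hpos
      field_simp
    have hsub_i : Integrable (fun z => ψ π z - ρZ z) := by exact hψπ_i.sub hρZ_i
    rw [integral_congr_ae hid, integral_sub hsub_i hG_i,
      integral_sub hψπ_i hρZ_i, hψπ_int, hρZ_int, hG_int, sub_self, sub_zero]
  have hnn : 0 ≤ᵐ[(volume : Measure (Fin n → ℝ))] fun z => (ψ π z - ρZ z) ^ 2 / ψ π z := by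
    filter_upwards [hψπ_pos] with z hpos
    exact div_nonneg (sq_nonneg _) (le_of_lt hpos)
  have h0 := (integral_eq_zero_iff_of_nonneg_ae hnn hint1).mp hkey
  filter_upwards [h0, hψπ_pos] with z hz hpos
  have h1 : (ψ π z - ρZ z) ^ 2 = 0 := by
    have := hz
    simp only [Pi.zero_apply] at this
    rcases div_eq_zero_iff.mp this with h | h
    · exact h
    · exact absurd h (ne_of_gt hpos)
  have h2 : ψ π z - ρZ z = 0 := by
    exact pow_eq_zero_iff (by norm_num) |>.mp h1
  linarith
end

section
/- Let π be a probability density on ℝ^d such that ψ(π)(z) > 0 for almost every z, and assume all integrals below are well defined and finite. Then one iteration step does not decrease the infinite-data log-likelihood: L_cc(Ψπ) ≥ L_cc(π). -/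
open MeasureTheory
open scoped ENNReal

set_option maxHeartbeats 1000000


lemma lintegral_sq_le_mul_div {α : Type*} [MeasurableSpace α] (μ : Measure α)
    (A C : α → ℝ≥0∞) (hA : AEMeasurable A μ) (hC : AEMeasurable C μ)
    (hae : ∀ᵐ x ∂μ, C x ≠ 0 ∧ C x ≠ ∞) :
    (∫⁻ x, A x ∂μ) * (∫⁻ x, A x ∂μ) ≤
      (∫⁻ x, A x * C x ∂μ) * (∫⁻ x, A x / C x ∂μ) := by
  set f : α → ℝ≥0∞ := fun x => (A x * C x) ^ (1/2 : ℝ) with hf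
  set g : α → ℝ≥0∞ := fun x => (A x / C x) ^ (1/2 : ℝ) with hg
  have hconj : Real.HolderConjugate 2 2 := Real.HolderConjugate.two_two
  have hfm : AEMeasurable f μ := (hA.mul hC).pow aemeasurable_const
  have hgm : AEMeasurable g μ := (hA.div hC).pow aemeasurable_const
  have hCS := ENNReal.lintegral_mul_le_Lp_mul_Lq μ hconj hfm hgm
  have hfg : ∀ᵐ x ∂μ, (f * g) x = A x := by
    filter_upwards [hae] with x ⟨hC0, hCt⟩
    show (A x * C x) ^ (1/2 : ℝ) * (A x / C x) ^ (1/2 : ℝ) = A x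
    rw [← ENNReal.mul_rpow_of_nonneg _ _ (by norm_num : (0:ℝ) ≤ 1/2)]
    have : A x * C x * (A x / C x) = A x * A x := by
      rw [div_eq_mul_inv]
      calc A x * C x * (A x * (C x)⁻¹) = A x * A x * (C x * (C x)⁻¹) := by ring
        _ = A x * A x := by rw [ENNReal.mul_inv_cancel hC0 hCt, mul_one]
    rw [this, ← sq, ← ENNReal.rpow_natCast (A x) 2, ← ENNReal.rpow_mul]
    norm_num
  have h1 : (∫⁻ x, A x ∂μ) ≤
      (∫⁻ x, f x ^ (2:ℝ) ∂μ) ^ (1/2:ℝ) * (∫⁻ x, g x ^ (2:ℝ) ∂μ) ^ (1/2:ℝ) := by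
    calc (∫⁻ x, A x ∂μ) = ∫⁻ x, (f * g) x ∂μ := (lintegral_congr_ae hfg).symm
      _ ≤ _ := hCS
  have hf2 : ∀ x, f x ^ (2:ℝ) = A x * C x := by
    intro x
    rw [hf, ← ENNReal.rpow_mul]
    norm_num
  have hg2 : ∀ x, g x ^ (2:ℝ) = A x / C x := by
    intro x
    rw [hg, ← ENNReal.rpow_mul]
    norm_num
  simp only [hf2, hg2] at h1
  calc (∫⁻ x, A x ∂μ) * (∫⁻ x, A x ∂μ)
      ≤ ((∫⁻ x, A x * C x ∂μ) ^ (1/2:ℝ) * (∫⁻ x, A x / C x ∂μ) ^ (1/2:ℝ)) *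
        ((∫⁻ x, A x * C x ∂μ) ^ (1/2:ℝ) * (∫⁻ x, A x / C x ∂μ) ^ (1/2:ℝ)) :=
        mul_le_mul' h1 h1
    _ = ((∫⁻ x, A x * C x ∂μ) ^ (1/2:ℝ) * (∫⁻ x, A x * C x ∂μ) ^ (1/2:ℝ)) *
        ((∫⁻ x, A x / C x ∂μ) ^ (1/2:ℝ) * (∫⁻ x, A x / C x ∂μ) ^ (1/2:ℝ)) := by
        ring
    _ = (∫⁻ x, A x * C x ∂μ) * (∫⁻ x, A x / C x ∂μ) := by
        rw [← ENNReal.rpow_add_of_nonneg _ _ (by norm_num) (by norm_num),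
          ← ENNReal.rpow_add_of_nonneg _ _ (by norm_num) (by norm_num)]
        norm_num


/-- One step of the fixed-point iteration `Ψ` does not decrease the
infinite-data log-likelihood: `L_cc(Ψ π) ≥ L_cc(π)` (all integrals involved being
assumed well defined and finite). -/
theorem iteration_increases_likelihood {d n : ℕ}
    (φ : (Fin d → ℝ) → (Fin n → ℝ)) (hφ : Measurable φ)
    (ρE : (Fin n → ℝ) → ℝ) (hρE_meas : Measurable ρE)
    (hρE_nonneg : ∀ e, 0 ≤ ρE e) (hρE_int : (∫ e, ρE e) = 1)
    (ρZ : (Fin n → ℝ) → ℝ) (hρZ_meas : Measurable ρZ)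
    (hρZ_nonneg : ∀ z, 0 ≤ ρZ z) (hρZ_int : (∫ z, ρZ z) = 1)
    (ψ : ((Fin d → ℝ) → ℝ) → (Fin n → ℝ) → ℝ)
    (hψ : ∀ p z, ψ p z = ∫ x, ρE (z - φ x) * p x)
    (Ψ : ((Fin d → ℝ) → ℝ) → (Fin d → ℝ) → ℝ)
    (hΨ : ∀ p x, Ψ p x = p x * ∫ z, (ρE (z - φ x) / ψ p z) * ρZ z)
    (Lcc : ((Fin d → ℝ) → ℝ) → ℝ)
    (hLcc : ∀ p, Lcc p = ∫ z, ρZ z * Real.log (ψ p z))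
    (π : (Fin d → ℝ) → ℝ) (hπ_meas : Measurable π)
    (hπ_nonneg : ∀ x, 0 ≤ π x) (hπ_int : (∫ x, π x) = 1)
    (hψπ_pos : ∀ᵐ z ∂(volume : Measure (Fin n → ℝ)), 0 < ψ π z)
    (hint0 : Integrable (fun p : (Fin d → ℝ) × (Fin n → ℝ) =>
      π p.1 * ρE (p.2 - φ p.1) * ρZ p.2 / ψ π p.2))
    (hint1 : Integrable (fun z => ρZ z * Real.log (ψ π z)))
    (hint2 : Integrable (fun z => ρZ z * Real.log (ψ (Ψ π) z))) :
    Lcc π ≤ Lcc (Ψ π) := by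
  -- basic integrability from nonzero integrals
  have hρE_integrable : Integrable ρE := by
    by_contra h
    rw [integral_undef h] at hρE_int; exact one_ne_zero hρE_int.symm
  have hπ_integrable : Integrable π := by
    by_contra h
    rw [integral_undef h] at hπ_int; exact one_ne_zero hπ_int.symm
  have hρZ_integrable : Integrable ρZ := by
    by_contra h
    rw [integral_undef h] at hρZ_int; exact one_ne_zero hρZ_int.symm
  -- measurability of ψ π
  have hS_meas : Measurable fun z => ψ π z := by
    simp only [hψ]
    exact (StronglyMeasurable.integral_prod_right'
      (f := fun p : (Fin n → ℝ) × (Fin d → ℝ) => ρE (p.1 - φ p.2) * π p.2)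
      ((hρE_meas.comp ((measurable_fst.sub (hφ.comp measurable_snd)))).mul
        (hπ_meas.comp measurable_snd)).stronglyMeasurable).measurable
  -- c
  set c : (Fin d → ℝ) → ℝ := fun x => ∫ z, (ρE (z - φ x) / ψ π z) * ρZ z with hc
  have hc_meas : Measurable c := by
    exact (StronglyMeasurable.integral_prod_right'
      (f := fun p : (Fin d → ℝ) × (Fin n → ℝ) => (ρE (p.2 - φ p.1) / ψ π p.2) * ρZ p.2)
      (((hρE_meas.comp ((measurable_snd.sub (hφ.comp measurable_fst)))).div
        (hS_meas.comp measurable_snd)).mul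
        (hρZ_meas.comp measurable_snd)).stronglyMeasurable).measurable
  have hΨeq : ∀ x, Ψ π x = π x * c x := fun x => hΨ π x
  have hS_nonneg : ∀ z, 0 ≤ ψ π z := fun z => by
    rw [hψ]; exact integral_nonneg fun x => mul_nonneg (hρE_nonneg _) (hπ_nonneg _)
  have hc_nonneg : ∀ x, 0 ≤ c x := fun x =>
    integral_nonneg fun z => mul_nonneg (div_nonneg (hρE_nonneg _) (hS_nonneg z)) (hρZ_nonneg _)
  have hΨ_nonneg : ∀ x, 0 ≤ Ψ π x := fun x => by
    rw [hΨeq]; exact mul_nonneg (hπ_nonneg _) (hc_nonneg _)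
  have hΨ_meas : Measurable (Ψ π) := by
    have : Ψ π = fun x => π x * c x := funext hΨeq
    rw [this]; exact hπ_meas.mul hc_meas
  have hT_meas : Measurable fun z => ψ (Ψ π) z := by
    simp only [hψ]
    exact (StronglyMeasurable.integral_prod_right'
      (f := fun p : (Fin n → ℝ) × (Fin d → ℝ) => ρE (p.1 - φ p.2) * Ψ π p.2)
      ((hρE_meas.comp ((measurable_fst.sub (hφ.comp measurable_snd)))).mul
        (hΨ_meas.comp measurable_snd)).stronglyMeasurable).measurable
  have hT_nonneg : ∀ z, 0 ≤ ψ (Ψ π) z := fun z => by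
    rw [hψ]; exact integral_nonneg fun x => mul_nonneg (hρE_nonneg _) (hΨ_nonneg _)
  -- hint0 consequences
  set F : (Fin d → ℝ) × (Fin n → ℝ) → ℝ :=
    fun p => π p.1 * ρE (p.2 - φ p.1) * ρZ p.2 / ψ π p.2 with hF
  have hint0' : Integrable F
      ((volume : Measure (Fin d → ℝ)).prod (volume : Measure (Fin n → ℝ))) := by
    exact (Measure.volume_eq_prod (Fin d → ℝ) (Fin n → ℝ)) ▸ hint0
  have hax : ∀ᵐ x ∂(volume : Measure (Fin d → ℝ)),
      Integrable (fun z => F (x, z)) := hint0'.prod_right_ae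
  have haz : ∀ᵐ z ∂(volume : Measure (Fin n → ℝ)),
      Integrable (fun x => F (x, z)) := hint0'.prod_left_ae
  have hpc_int : Integrable (fun x => π x * c x) := by
    refine hint0'.integral_prod_left.congr (Filter.Eventually.of_forall fun x => ?_)
    show (∫ z, F (x, z)) = π x * c x
    rw [hc, ← integral_const_mul]
    exact integral_congr_ae (Filter.Eventually.of_forall fun z => by
      simp only [hF]; ring)
  -- representation of c as lintegral
  have hC_rep : ∀ᵐ x ∂(volume : Measure (Fin d → ℝ)), π x ≠ 0 →
      ENNReal.ofReal (c x) = ∫⁻ z, ENNReal.ofReal (ρE (z - φ x)) *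
        ENNReal.ofReal (ρZ z) / ENNReal.ofReal (ψ π z) := by
    filter_upwards [hax] with x hx hπx
    have hcint : Integrable (fun z => (ρE (z - φ x) / ψ π z) * ρZ z) := by
      refine (hx.const_mul (π x)⁻¹).congr (Filter.Eventually.of_forall fun z => ?_)
      simp only [hF]
      field_simp
    rw [hc]
    rw [ofReal_integral_eq_lintegral_ofReal hcint (Filter.Eventually.of_forall fun z =>
      mul_nonneg (div_nonneg (hρE_nonneg _) (hS_nonneg _)) (hρZ_nonneg _))]
    refine lintegral_congr_ae ?_
    filter_upwards [hψπ_pos] with z hz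
    rw [ENNReal.ofReal_mul (div_nonneg (hρE_nonneg _) (hS_nonneg _)),
      ENNReal.ofReal_div_of_pos hz]
    simp [div_eq_mul_inv, mul_comm, mul_assoc, mul_left_comm]
  -- representation of ψ π as lintegral
  have hS_rep : ∀ᵐ z ∂(volume : Measure (Fin n → ℝ)), ρZ z ≠ 0 →
      (Integrable (fun x => ρE (z - φ x) * π x) ∧
        ENNReal.ofReal (ψ π z) = ∫⁻ x, ENNReal.ofReal (ρE (z - φ x)) *
          ENNReal.ofReal (π x)) := by
    filter_upwards [haz, hψπ_pos] with z hz hψz hρZz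
    have hEP : Integrable (fun x => ρE (z - φ x) * π x) := by
      refine (hz.const_mul (ψ π z / ρZ z)).congr (Filter.Eventually.of_forall fun x => ?_)
      simp only [hF]
      field_simp
    refine ⟨hEP, ?_⟩
    rw [hψ]
    rw [ofReal_integral_eq_lintegral_ofReal hEP (Filter.Eventually.of_forall fun x =>
      mul_nonneg (hρE_nonneg _) (hπ_nonneg _))]
    exact lintegral_congr fun x => ENNReal.ofReal_mul (hρE_nonneg _)
  -- translation invariance: mass of shifted ρE is 1
  have hE_one : ∀ x, (∫⁻ z, ENNReal.ofReal (ρE (z - φ x))) = 1 := by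
    intro x
    rw [lintegral_sub_right_eq_self (fun e => ENNReal.ofReal (ρE e)) (φ x)]
    rw [← ofReal_integral_eq_lintegral_ofReal hρE_integrable
      (Filter.Eventually.of_forall hρE_nonneg), hρE_int, ENNReal.ofReal_one]
  -- πc mass finite
  have hPC_fin : (∫⁻ x, ENNReal.ofReal (π x * c x)) < ⊤ := by
    rw [← ofReal_integral_eq_lintegral_ofReal hpc_int (Filter.Eventually.of_forall fun x =>
      mul_nonneg (hπ_nonneg _) (hc_nonneg _))]
    exact ENNReal.ofReal_lt_top
  -- joint measurability helpers
  have mE : Measurable fun p : (Fin n → ℝ) × (Fin d → ℝ) =>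
      ENNReal.ofReal (ρE (p.1 - φ p.2)) :=
    ENNReal.measurable_ofReal.comp (hρE_meas.comp
      (measurable_fst.sub (hφ.comp measurable_snd)))
  -- Computation I : a.e. z, x ↦ ρE (z - φ x) * (π x * c x) has finite lintegral
  have hT_fin : ∀ᵐ z ∂(volume : Measure (Fin n → ℝ)),
      (∫⁻ x, ENNReal.ofReal (ρE (z - φ x)) * ENNReal.ofReal (π x * c x)) < ⊤ := by
    have hm : Measurable fun p : (Fin n → ℝ) × (Fin d → ℝ) =>
        ENNReal.ofReal (ρE (p.1 - φ p.2)) * ENNReal.ofReal (π p.2 * c p.2) :=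
      mE.mul (ENNReal.measurable_ofReal.comp
        ((hπ_meas.mul hc_meas).comp measurable_snd))
    refine ae_lt_top (Measurable.lintegral_prod_right hm) ?_
    have hswap : (∫⁻ z, ∫⁻ x, ENNReal.ofReal (ρE (z - φ x)) *
        ENNReal.ofReal (π x * c x)) =
        ∫⁻ x, ∫⁻ z, ENNReal.ofReal (ρE (z - φ x)) * ENNReal.ofReal (π x * c x) :=
      lintegral_lintegral_swap hm.aemeasurable
    rw [hswap]
    have : (∫⁻ x, ∫⁻ z, ENNReal.ofReal (ρE (z - φ x)) * ENNReal.ofReal (π x * c x)) =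
        ∫⁻ x, ENNReal.ofReal (π x * c x) := by
      refine lintegral_congr fun x => ?_
      rw [lintegral_mul_const' _ _ ENNReal.ofReal_ne_top, hE_one, one_mul]
    rw [this]
    exact hPC_fin.ne
  -- representation of ψ (Ψ π) as lintegral
  have hT_rep : ∀ᵐ z ∂(volume : Measure (Fin n → ℝ)),
      ENNReal.ofReal (ψ (Ψ π) z) = ∫⁻ x, ENNReal.ofReal (ρE (z - φ x)) *
        ENNReal.ofReal (π x * c x) := by
    filter_upwards [hT_fin] with z hfin
    have hmz : Measurable fun x => ρE (z - φ x) * (π x * c x) :=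
      (hρE_meas.comp (measurable_const.sub hφ)).mul (hπ_meas.mul hc_meas)
    have hnn : ∀ x, 0 ≤ ρE (z - φ x) * (π x * c x) := fun x =>
      mul_nonneg (hρE_nonneg _) (mul_nonneg (hπ_nonneg _) (hc_nonneg _))
    have hofm : ∀ x, ENNReal.ofReal (ρE (z - φ x) * (π x * c x)) =
        ENNReal.ofReal (ρE (z - φ x)) * ENNReal.ofReal (π x * c x) := fun x =>
      ENNReal.ofReal_mul (hρE_nonneg _)
    have hint : Integrable (fun x => ρE (z - φ x) * (π x * c x)) := by
      refine ⟨hmz.aestronglyMeasurable, ?_⟩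
      rw [hasFiniteIntegral_iff_ofReal (Filter.Eventually.of_forall hnn)]
      rw [lintegral_congr hofm]
      exact hfin
    rw [hψ]
    have heq : (∫ x, ρE (z - φ x) * Ψ π x) = ∫ x, ρE (z - φ x) * (π x * c x) :=
      integral_congr_ae (Filter.Eventually.of_forall fun x => by simp only []; rw [hΨeq x])
    rw [heq, ofReal_integral_eq_lintegral_ofReal hint
      (Filter.Eventually.of_forall hnn)]
    exact lintegral_congr hofm
  -- the set where c is positive
  set G : Set (Fin d → ℝ) := {x | 0 < c x} with hG
  have hGmeas : MeasurableSet G := measurableSet_lt measurable_const hc_meas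
  have hGc0 : ∀ x ∈ Gᶜ, c x = 0 := fun x hx =>
    le_antisymm (not_lt.mp hx) (hc_nonneg x)
  -- the joint kernel
  set H0 : (Fin d → ℝ) → (Fin n → ℝ) → ℝ≥0∞ := fun x z =>
    ENNReal.ofReal (ρE (z - φ x)) * ENNReal.ofReal (π x) *
      (ENNReal.ofReal (ρZ z) / ENNReal.ofReal (ψ π z)) with hH0
  have mH0 : Measurable (Function.uncurry H0) := by
    apply Measurable.mul
    · exact (ENNReal.measurable_ofReal.comp (hρE_meas.comp
        (measurable_snd.sub (hφ.comp measurable_fst)))).mul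
        (ENNReal.measurable_ofReal.comp (hπ_meas.comp measurable_fst))
    · exact (ENNReal.measurable_ofReal.comp (hρZ_meas.comp measurable_snd)).div
        (ENNReal.measurable_ofReal.comp (hS_meas.comp measurable_snd))
  -- on Gᶜ the iterated integral vanishes
  have hW : (∫⁻ x in Gᶜ, ∫⁻ z, H0 x z) = 0 := by
    have h1 : (∫⁻ x in Gᶜ, ∫⁻ z, H0 x z) =
        ∫⁻ x in Gᶜ, ENNReal.ofReal (π x) * ENNReal.ofReal (c x) := by
      refine lintegral_congr_ae ?_
      filter_upwards [ae_restrict_of_ae hC_rep] with x hx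
      by_cases hπx : π x = 0
      · simp [hH0, hπx]
      · rw [hx hπx]
        rw [← lintegral_const_mul' _ _ ENNReal.ofReal_ne_top]
        refine lintegral_congr fun z => ?_
        simp only [hH0]
        simp [div_eq_mul_inv, mul_comm, mul_left_comm, mul_assoc]
    rw [h1]
    calc (∫⁻ x in Gᶜ, ENNReal.ofReal (π x) * ENNReal.ofReal (c x)) =
        ∫⁻ (_ : Fin d → ℝ) in Gᶜ, 0 := setLIntegral_congr_fun hGmeas.compl
          (fun x hx => by simp [hGc0 x hx])
      _ = 0 := lintegral_zero
  -- for a.e. z, the Gᶜ part of the kernel vanishes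
  have hWz : ∀ᵐ z ∂(volume : Measure (Fin n → ℝ)), (∫⁻ x in Gᶜ, H0 x z) = 0 := by
    have h0 : (∫⁻ z, ∫⁻ x in Gᶜ, H0 x z) = 0 := by
      have hsw := lintegral_lintegral_swap
        (μ := (volume : Measure (Fin d → ℝ)).restrict Gᶜ)
        (ν := (volume : Measure (Fin n → ℝ))) (f := H0) mH0.aemeasurable
      rw [← hsw]
      exact hW
    have hmz : Measurable fun z => ∫⁻ x in Gᶜ, H0 x z :=
      Measurable.lintegral_prod_right
        (ν := (volume : Measure (Fin d → ℝ)).restrict Gᶜ)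
        (f := fun z x => H0 x z)
        ((mH0.comp measurable_swap).comp (measurable_fst.prodMk measurable_snd))
    exact (lintegral_eq_zero_iff hmz).mp h0
  -- ψ π only charges G (a.e. where ρZ ≠ 0)
  have hS_G : ∀ᵐ z ∂(volume : Measure (Fin n → ℝ)), ρZ z ≠ 0 →
      ENNReal.ofReal (ψ π z) = ∫⁻ x in G,
        ENNReal.ofReal (ρE (z - φ x)) * ENNReal.ofReal (π x) := by
    filter_upwards [hS_rep, hWz, hψπ_pos] with z hrep hzero hpos hρZz
    have hZpos : 0 < ρZ z := lt_of_le_of_ne (hρZ_nonneg z) (Ne.symm hρZz)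
    have hk0 : ENNReal.ofReal (ρZ z) / ENNReal.ofReal (ψ π z) ≠ 0 := by
      rw [Ne, ENNReal.div_eq_zero_iff]
      push_neg
      exact ⟨(ENNReal.ofReal_pos.mpr hZpos).ne', ENNReal.ofReal_ne_top⟩
    have hkt : ENNReal.ofReal (ρZ z) / ENNReal.ofReal (ψ π z) ≠ ⊤ := by
      rw [Ne, ENNReal.div_eq_top]
      push_neg
      exact ⟨fun _ => (ENNReal.ofReal_pos.mpr hpos).ne',
        fun h => absurd h ENNReal.ofReal_ne_top⟩
    have hGc : (∫⁻ x in Gᶜ,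
        ENNReal.ofReal (ρE (z - φ x)) * ENNReal.ofReal (π x)) = 0 := by
      have heq : (∫⁻ x in Gᶜ, H0 x z) = (∫⁻ x in Gᶜ,
          ENNReal.ofReal (ρE (z - φ x)) * ENNReal.ofReal (π x)) *
          (ENNReal.ofReal (ρZ z) / ENNReal.ofReal (ψ π z)) :=
        lintegral_mul_const' _ _ hkt
      rw [heq] at hzero
      rcases mul_eq_zero.mp hzero with h | h
      · exact h
      · exact absurd h hk0
    rw [(hrep hρZz).2, ← lintegral_add_compl _ hGmeas, hGc, add_zero]
  -- per-z: Cauchy-Schwarz bound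
  set R : (Fin n → ℝ) → ℝ≥0∞ := fun z => ∫⁻ x in G,
    ENNReal.ofReal (ρE (z - φ x)) * ENNReal.ofReal (π x) / ENNReal.ofReal (c x)
    with hR
  have hMain : ∀ᵐ z ∂(volume : Measure (Fin n → ℝ)), ρZ z ≠ 0 →
      (0 < ψ (Ψ π) z ∧
        ENNReal.ofReal (ρZ z) * (ENNReal.ofReal (ψ π z) / ENNReal.ofReal (ψ (Ψ π) z))
          ≤ ENNReal.ofReal (ρZ z) * (R z / ENNReal.ofReal (ψ π z))) := by
    filter_upwards [hS_G, hT_rep, hψπ_pos] with z hSG hTr hpos hρZz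
    set S : ℝ≥0∞ := ENNReal.ofReal (ψ π z) with hSdef
    set T : ℝ≥0∞ := ENNReal.ofReal (ψ (Ψ π) z) with hTdef
    have hS0 : S ≠ 0 := (ENNReal.ofReal_pos.mpr hpos).ne'
    have hSt : S ≠ ⊤ := ENNReal.ofReal_ne_top
    have hTt : T ≠ ⊤ := ENNReal.ofReal_ne_top
    have hAm : AEMeasurable (fun x => ENNReal.ofReal (ρE (z - φ x)) *
        ENNReal.ofReal (π x)) ((volume : Measure (Fin d → ℝ)).restrict G) :=
      ((ENNReal.measurable_ofReal.comp (hρE_meas.comp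
        (measurable_const.sub hφ))).mul
        (ENNReal.measurable_ofReal.comp hπ_meas)).aemeasurable
    have hCm : AEMeasurable (fun x => ENNReal.ofReal (c x))
        ((volume : Measure (Fin d → ℝ)).restrict G) :=
      (ENNReal.measurable_ofReal.comp hc_meas).aemeasurable
    have hae : ∀ᵐ x ∂((volume : Measure (Fin d → ℝ)).restrict G),
        ENNReal.ofReal (c x) ≠ 0 ∧ ENNReal.ofReal (c x) ≠ ⊤ := by
      filter_upwards [ae_restrict_mem hGmeas] with x hx
      exact ⟨(ENNReal.ofReal_pos.mpr hx).ne', ENNReal.ofReal_ne_top⟩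
    have hCS := lintegral_sq_le_mul_div ((volume : Measure (Fin d → ℝ)).restrict G)
      _ _ hAm hCm hae
    -- ∫⁻ in G, A * C ≤ T
    have hTle : (∫⁻ x in G, (ENNReal.ofReal (ρE (z - φ x)) * ENNReal.ofReal (π x)) *
        ENNReal.ofReal (c x)) ≤ T := by
      rw [hTr]
      refine le_trans (setLIntegral_le_lintegral _ _) (le_of_eq ?_)
      refine lintegral_congr fun x => ?_
      rw [ENNReal.ofReal_mul (hπ_nonneg x), mul_assoc]
    have hsq : S * S ≤ T * R z := by
      rw [hSG hρZz]
      exact le_trans hCS (mul_le_mul_left hTle _)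
    have hT0 : T ≠ 0 := by
      intro h
      rw [h, zero_mul, le_zero_iff, mul_eq_zero, or_self] at hsq
      exact hS0 hsq
    have hTpos : 0 < ψ (Ψ π) z := by
      by_contra hle
      push_neg at hle
      exact hT0 (by rw [hTdef, ENNReal.ofReal_eq_zero.mpr hle])
    have hdiv : S / T ≤ R z / S := by
      rw [ENNReal.div_le_iff hT0 hTt]
      calc S ≤ T * R z / S :=
            (ENNReal.le_div_iff_mul_le (Or.inl hS0) (Or.inl hSt)).mpr hsq
        _ = R z / S * T := by
            simp [div_eq_mul_inv, mul_comm, mul_left_comm, mul_assoc]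
    exact ⟨hTpos, mul_le_mul_right hdiv _⟩
  have hP_one : (∫⁻ x, ENNReal.ofReal (π x)) = 1 := by
    rw [← ofReal_integral_eq_lintegral_ofReal hπ_integrable
      (Filter.Eventually.of_forall hπ_nonneg), hπ_int, ENNReal.ofReal_one]
  -- global bound on the comparison term
  have hRB : (∫⁻ z, ENNReal.ofReal (ρZ z) * (R z / ENNReal.ofReal (ψ π z))) ≤ 1 := by
    set H1 : (Fin d → ℝ) → (Fin n → ℝ) → ℝ≥0∞ := fun x z =>
      (ENNReal.ofReal (ρE (z - φ x)) * ENNReal.ofReal (π x) / ENNReal.ofReal (c x)) *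
        (ENNReal.ofReal (ρZ z) / ENNReal.ofReal (ψ π z)) with hH1
    have mH1 : Measurable (Function.uncurry H1) := by
      apply Measurable.mul
      · exact ((ENNReal.measurable_ofReal.comp (hρE_meas.comp
          (measurable_snd.sub (hφ.comp measurable_fst)))).mul
          (ENNReal.measurable_ofReal.comp (hπ_meas.comp measurable_fst))).div
          (ENNReal.measurable_ofReal.comp (hc_meas.comp measurable_fst))
      · exact (ENNReal.measurable_ofReal.comp (hρZ_meas.comp measurable_snd)).div
          (ENNReal.measurable_ofReal.comp (hS_meas.comp measurable_snd))
    have step1 : (∫⁻ z, ENNReal.ofReal (ρZ z) * (R z / ENNReal.ofReal (ψ π z))) =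
        ∫⁻ z, ∫⁻ x in G, H1 x z := by
      refine lintegral_congr_ae ?_
      filter_upwards [hψπ_pos] with z hpos
      have hkt : ENNReal.ofReal (ρZ z) / ENNReal.ofReal (ψ π z) ≠ ⊤ := by
        rw [Ne, ENNReal.div_eq_top]
        push_neg
        exact ⟨fun _ => (ENNReal.ofReal_pos.mpr hpos).ne',
          fun h => absurd h ENNReal.ofReal_ne_top⟩
      rw [lintegral_mul_const' _ _ hkt]
      simp [hR, div_eq_mul_inv, mul_comm, mul_left_comm, mul_assoc]
    have step2 : (∫⁻ z, ∫⁻ x in G, H1 x z) = ∫⁻ x in G, ∫⁻ z, H1 x z := by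
      have hsw := lintegral_lintegral_swap
        (μ := (volume : Measure (Fin d → ℝ)).restrict G)
        (ν := (volume : Measure (Fin n → ℝ))) (f := H1) mH1.aemeasurable
      rw [← hsw]
    have step3 : (∫⁻ x in G, ∫⁻ z, H1 x z) = ∫⁻ x in G, ENNReal.ofReal (π x) := by
      refine lintegral_congr_ae ?_
      filter_upwards [ae_restrict_mem hGmeas, ae_restrict_of_ae hC_rep] with x hx hrep
      have hC0 : ENNReal.ofReal (c x) ≠ 0 := (ENNReal.ofReal_pos.mpr hx).ne'
      have hCt : ENNReal.ofReal (c x) ≠ ⊤ := ENNReal.ofReal_ne_top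
      by_cases hπx : π x = 0
      · simp [hH1, hπx, ENNReal.zero_div]
      · have hpull : ∀ z, H1 x z = (ENNReal.ofReal (π x) / ENNReal.ofReal (c x)) *
            (ENNReal.ofReal (ρE (z - φ x)) * ENNReal.ofReal (ρZ z) /
              ENNReal.ofReal (ψ π z)) := by
          intro z
          simp [hH1, div_eq_mul_inv, mul_comm, mul_left_comm, mul_assoc]
        have hrt : ENNReal.ofReal (π x) / ENNReal.ofReal (c x) ≠ ⊤ := by
          rw [Ne, ENNReal.div_eq_top]
          push_neg
          exact ⟨fun _ => hC0, fun h => absurd h ENNReal.ofReal_ne_top⟩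
        rw [lintegral_congr hpull, lintegral_const_mul' _ _ hrt, ← hrep hπx]
        rw [ENNReal.div_mul_cancel hC0 hCt]
    calc (∫⁻ z, ENNReal.ofReal (ρZ z) * (R z / ENNReal.ofReal (ψ π z)))
        = ∫⁻ x in G, ENNReal.ofReal (π x) := by rw [step1, step2, step3]
      _ ≤ ∫⁻ x, ENNReal.ofReal (π x) := setLIntegral_le_lintegral _ _
      _ = 1 := hP_one
  -- the comparison function u
  set u : (Fin n → ℝ) → ℝ := fun z => ρZ z * (ψ π z / ψ (Ψ π) z) with hu
  have hu_meas : Measurable u := hρZ_meas.mul (hS_meas.div hT_meas)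
  have hu_nonneg : ∀ z, 0 ≤ u z := fun z =>
    mul_nonneg (hρZ_nonneg z) (div_nonneg (hS_nonneg z) (hT_nonneg z))
  have hUae : ∀ᵐ z ∂(volume : Measure (Fin n → ℝ)), ENNReal.ofReal (u z) ≤
      ENNReal.ofReal (ρZ z) * (R z / ENNReal.ofReal (ψ π z)) := by
    filter_upwards [hMain] with z hm
    by_cases hz : ρZ z = 0
    · simp [hu, hz]
    · have hT'pos := (hm hz).1
      have : ENNReal.ofReal (u z) = ENNReal.ofReal (ρZ z) *
          (ENNReal.ofReal (ψ π z) / ENNReal.ofReal (ψ (Ψ π) z)) := by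
        rw [hu, ENNReal.ofReal_mul (hρZ_nonneg z), ENNReal.ofReal_div_of_pos hT'pos]
      rw [this]
      exact (hm hz).2
  have hU_fin : (∫⁻ z, ENNReal.ofReal (u z)) ≤ 1 :=
    le_trans (lintegral_mono_ae hUae) hRB
  have hu_int : Integrable u := by
    refine ⟨hu_meas.aestronglyMeasurable, ?_⟩
    rw [hasFiniteIntegral_iff_ofReal (Filter.Eventually.of_forall hu_nonneg)]
    exact lt_of_le_of_lt hU_fin ENNReal.one_lt_top
  have hu_le_one : (∫ z, u z) ≤ 1 := by
    rw [integral_eq_lintegral_of_nonneg_ae (Filter.Eventually.of_forall hu_nonneg)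
      hu_meas.aestronglyMeasurable]
    calc (∫⁻ z, ENNReal.ofReal (u z)).toReal ≤ (1 : ℝ≥0∞).toReal :=
          ENNReal.toReal_mono ENNReal.one_ne_top hU_fin
      _ = 1 := by simp
  -- pointwise comparison
  have hptwise : ∀ᵐ z ∂(volume : Measure (Fin n → ℝ)),
      ρZ z - u z ≤ ρZ z * Real.log (ψ (Ψ π) z) - ρZ z * Real.log (ψ π z) := by
    filter_upwards [hMain, hψπ_pos] with z hm hpos
    by_cases hz : ρZ z = 0
    · simp [hu, hz]
    · have hT'pos := (hm hz).1
      have hlog : Real.log (ψ π z / ψ (Ψ π) z) ≤ ψ π z / ψ (Ψ π) z - 1 :=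
        Real.log_le_sub_one_of_pos (div_pos hpos hT'pos)
      rw [Real.log_div hpos.ne' hT'pos.ne'] at hlog
      have hkey : (1 : ℝ) - ψ π z / ψ (Ψ π) z ≤
          Real.log (ψ (Ψ π) z) - Real.log (ψ π z) := by linarith
      have := mul_le_mul_of_nonneg_left hkey (hρZ_nonneg z)
      rw [hu]
      ring_nf
      ring_nf at this
      linarith
  -- conclusion
  rw [hLcc, hLcc]
  have hsub := integral_sub hint2 hint1
  have hmono : (∫ z, (ρZ z - u z)) ≤
      ∫ z, (ρZ z * Real.log (ψ (Ψ π) z) - ρZ z * Real.log (ψ π z)) :=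
    integral_mono_ae (hρZ_integrable.sub hu_int) (hint2.sub hint1) hptwise
  rw [hsub] at hmono
  rw [integral_sub hρZ_integrable hu_int, hρZ_int] at hmono
  linarith
end

section
/- Let L ∈ ℝ^{M×K} have nonnegative entries and let w ∈ 𝒲 satisfy Σ_{j=1}^K w_j L(m,j) > 0 for every m. Then the discrete self-consistency iteration does not decrease the discrete log-likelihood: ℒ_dd(Ψ_dd w) ≥ ℒ_dd(w), where ℒ_dd(v) = (1/M) Σ_{m=1}^M log ( Σ_{k=1}^K v_k L(m,k) ) and [Ψ_dd w]_k = (w_k / M) Σ_{m=1}^M L(m,k) / (Σ_{j=1}^K w_j L(m,j)). -/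
open Finset

/-- The discrete self-consistency (EM) iteration `Ψ_dd` does not decrease
the discrete marginal log-likelihood `ℒ_dd`. -/
theorem discrete_iteration_increases_likelihood {M K : ℕ} (hM : 0 < M)
    (L : Fin M → Fin K → ℝ) (hL : ∀ m k, 0 ≤ L m k)
    (w : Fin K → ℝ) (hw_nonneg : ∀ k, 0 ≤ w k) (hw_sum : ∑ k, w k = 1)
    (hpos : ∀ m, 0 < ∑ j, w j * L m j)
    (Ψw : Fin K → ℝ)
    (hΨw : ∀ k, Ψw k = w k / (M : ℝ) * ∑ m, L m k / (∑ j, w j * L m j))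
    (Ldd : (Fin K → ℝ) → ℝ)
    (hLdd : ∀ v, Ldd v = (1 / (M : ℝ)) * ∑ m, Real.log (∑ k, v k * L m k)) :
    Ldd w ≤ Ldd Ψw := by
  have hMpos : (0:ℝ) < M := Nat.cast_pos.mpr hM
  set b : Fin M → ℝ := fun m => ∑ j, w j * L m j with hb
  have hb_pos : ∀ m, 0 < b m := hpos
  set p : Fin M → Fin K → ℝ := fun m k => w k * L m k / b m with hp
  have hp_nonneg : ∀ m k, 0 ≤ p m k := fun m k =>
    div_nonneg (mul_nonneg (hw_nonneg k) (hL m k)) (hb_pos m).le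
  have hp_sum : ∀ m, ∑ k, p m k = 1 := fun m => by
    rw [hp, ← Finset.sum_div, div_eq_one_iff_eq (hb_pos m).ne']
  have hΨ_zero : ∀ k, w k = 0 → Ψw k = 0 := fun k h => by simp [hΨw, h]
  have hΨ_nonneg : ∀ k, 0 ≤ Ψw k := fun k => by
    rw [hΨw]
    exact mul_nonneg (div_nonneg (hw_nonneg k) (Nat.cast_nonneg M))
      (Finset.sum_nonneg fun m _ => div_nonneg (hL m k) (hb_pos m).le)
  have hp_col : ∀ k, ∑ m, p m k = M * Ψw k := fun k => by
    rw [hΨw, ← mul_assoc]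
    have h1 : (M:ℝ) * (w k / M) = w k := by field_simp
    rw [h1, Finset.mul_sum]
    exact Finset.sum_congr rfl fun m _ => (mul_div_assoc _ _ _)
  have hΨ_sum : ∑ k, Ψw k = 1 := by
    have h : ∑ k, Ψw k = ∑ k, (∑ m, p m k) / M := by
      refine Finset.sum_congr rfl fun k _ => ?_
      rw [hp_col k, mul_div_cancel_left₀ _ hMpos.ne']
    rw [h, ← Finset.sum_div, Finset.sum_comm]
    simp only [hp_sum]
    simp [hMpos.ne']
  -- r k = Ψw k / w k (with junk value 1 when w k = 0)
  set r : Fin K → ℝ := fun k => if w k = 0 then 1 else Ψw k / w k with hr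
  have hr_nonneg : ∀ k, 0 ≤ r k := fun k => by
    rw [hr]; dsimp only
    split
    · norm_num
    · exact div_nonneg (hΨ_nonneg k) (hw_nonneg k)
  have hΨ_pos : ∀ m k, 0 < p m k → 0 < Ψw k := fun m k hpk => by
    have hsum : 0 < ∑ m', p m' k :=
      Finset.sum_pos' (fun m' _ => hp_nonneg m' k) ⟨m, Finset.mem_univ m, hpk⟩
    rw [hp_col k] at hsum
    nlinarith [hΨ_nonneg k]
  have hw_pos : ∀ m k, 0 < p m k → 0 < w k := fun m k hpk => by
    rcases (hw_nonneg k).lt_or_eq with h | h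
    · exact h
    · exfalso
      have : p m k = 0 := by rw [hp]; dsimp only; rw [← h]; ring_nf
      linarith
  have hr_pos : ∀ m k, 0 < p m k → 0 < r k := fun m k hpk => by
    have hwk := hw_pos m k hpk
    rw [hr]; dsimp only
    rw [if_neg hwk.ne']
    exact div_pos (hΨ_pos m k hpk) hwk
  -- marginal of Ψw
  set a : Fin M → ℝ := fun m => ∑ k, Ψw k * L m k with ha
  have ha_pos : ∀ m, 0 < a m := fun m => by
    obtain ⟨k, _, hk⟩ := Finset.exists_lt_of_sum_lt (f := fun _ : Fin K => (0:ℝ))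
      (g := fun k => w k * L m k) (by simpa using hb_pos m)
    have hpk : 0 < p m k := div_pos hk (hb_pos m)
    have hLk : 0 < L m k := by
      rcases (hL m k).lt_or_eq with h | h
      · exact h
      · exfalso; rw [← h] at hk; simp at hk
    exact Finset.sum_pos' (fun k' _ => mul_nonneg (hΨ_nonneg k') (hL m k'))
      ⟨k, Finset.mem_univ k, mul_pos (hΨ_pos m k hpk) hLk⟩
  -- p m k * r k = Ψw k * L m k / b m
  have hpr : ∀ m k, p m k * r k = Ψw k * L m k / b m := fun m k => by
    rw [hp, hr]; dsimp only
    by_cases h : w k = 0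
    · simp [h, hΨ_zero k h]
    · rw [if_neg h]
      have h2 : w k * L m k / b m * (Ψw k / w k) = (w k)⁻¹ * w k * (Ψw k * L m k / b m) := by
        ring
      rw [h2, inv_mul_cancel₀ h, one_mul]
  have hpr_sum : ∀ m, ∑ k, p m k * r k = a m / b m := fun m => by
    simp only [hpr]
    rw [ha, ← Finset.sum_div]
  -- Jensen per m
  have jensen : ∀ m, ∑ k, p m k * Real.log (r k) ≤ Real.log (a m / b m) := fun m => by
    have hgm : ∏ k, r k ^ (p m k) ≤ ∑ k, p m k * r k :=
      Real.geom_mean_le_arith_mean_weighted Finset.univ (p m) r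
        (fun k _ => hp_nonneg m k) (hp_sum m) (fun k _ => hr_nonneg k)
    have hfac : ∀ k, 0 < r k ^ (p m k) := fun k => by
      rcases (hp_nonneg m k).eq_or_lt with h | h
      · rw [← h, Real.rpow_zero]; norm_num
      · exact Real.rpow_pos_of_pos (hr_pos m k h) _
    have hlogprod : Real.log (∏ k, r k ^ (p m k)) = ∑ k, p m k * Real.log (r k) := by
      rw [Real.log_prod (fun k _ => (hfac k).ne')]
      refine Finset.sum_congr rfl fun k _ => ?_
      rcases (hp_nonneg m k).eq_or_lt with h | h
      · rw [← h, Real.rpow_zero, Real.log_one]; ring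
      · rw [Real.log_rpow (hr_pos m k h)]
    calc ∑ k, p m k * Real.log (r k) = Real.log (∏ k, r k ^ (p m k)) := hlogprod.symm
      _ ≤ Real.log (∑ k, p m k * r k) := Real.log_le_log (Finset.prod_pos fun k _ => hfac k) hgm
      _ = Real.log (a m / b m) := by rw [hpr_sum m]
  -- KL nonnegativity, termwise
  have hkl : ∀ k, Ψw k - w k ≤ Ψw k * Real.log (r k) := fun k => by
    by_cases hwk : w k = 0
    · simp [hΨ_zero k hwk, hwk]
    · have hwk' : 0 < w k := (hw_nonneg k).lt_of_ne (Ne.symm hwk)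
      rw [hr]; dsimp only; rw [if_neg hwk]
      rcases (hΨ_nonneg k).eq_or_lt with h | h
      · rw [← h]; simp; linarith
      · have hlog : Real.log (w k / Ψw k) ≤ w k / Ψw k - 1 :=
          Real.log_le_sub_one_of_pos (div_pos hwk' h)
        have hinv : Real.log (Ψw k / w k) = -Real.log (w k / Ψw k) := by
          rw [Real.log_div h.ne' hwk'.ne', Real.log_div hwk'.ne' h.ne']; ring
        rw [hinv]
        have h2 : w k / Ψw k * Ψw k = w k := div_mul_cancel₀ _ h.ne'
        nlinarith [mul_le_mul_of_nonneg_left hlog h.le]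
  -- assemble
  have key : ∑ m, Real.log (b m) ≤ ∑ m, Real.log (a m) := by
    have h1 : (0:ℝ) ≤ ∑ k, (M:ℝ) * Ψw k * Real.log (r k) := by
      have : ∑ k, ((M:ℝ) * Ψw k - (M:ℝ) * w k) ≤ ∑ k, (M:ℝ) * Ψw k * Real.log (r k) := by
        refine Finset.sum_le_sum fun k _ => ?_
        have := hkl k
        nlinarith [hMpos]
      calc (0:ℝ) = ∑ k, ((M:ℝ) * Ψw k - (M:ℝ) * w k) := by
            rw [Finset.sum_sub_distrib, ← Finset.mul_sum, ← Finset.mul_sum, hΨ_sum, hw_sum]; ring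
        _ ≤ _ := this
    have h2 : ∑ k, (M:ℝ) * Ψw k * Real.log (r k) ≤ ∑ m, Real.log (a m / b m) := by
      calc ∑ k, (M:ℝ) * Ψw k * Real.log (r k) = ∑ k, (∑ m, p m k) * Real.log (r k) := by
            refine Finset.sum_congr rfl fun k _ => ?_; rw [hp_col k]
        _ = ∑ m, ∑ k, p m k * Real.log (r k) := by
            rw [Finset.sum_comm]
            refine Finset.sum_congr rfl fun k _ => ?_
            rw [Finset.sum_mul]
        _ ≤ ∑ m, Real.log (a m / b m) := Finset.sum_le_sum fun m _ => jensen m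
    have h3 : ∑ m, Real.log (a m / b m) = ∑ m, Real.log (a m) - ∑ m, Real.log (b m) := by
      rw [← Finset.sum_sub_distrib]
      exact Finset.sum_congr rfl fun m _ => Real.log_div (ha_pos m).ne' (hb_pos m).ne'
    linarith
  rw [hLdd, hLdd]
  exact mul_le_mul_of_nonneg_left key (by positivity)
end

section
/- Deconvolution form of the fixed-point map: let ρ_X be a probability density on ℝ^d and let ρ_Z = ψ(ρ_X). Let π be a probability density on ℝ^d with ψ(π)(z) > 0 for almost every z, and assume the function (x̃, z) ↦ ρ_X(x̃) ρ_E(z − φ(x̃)) ρ_E(z − φ(x)) π(x) / ψ(π)(z) is integrable for almost every x. Then for almost every x ∈ ℝ^d, (Ψπ)(x) = ∫_{ℝ^d} ρ_X(x̃) G(x, x̃) dx̃, where G(x, x̃) = ∫_{ℝ^n} p_π^z(x) ρ_E(z − φ(x̃)) dz and p_π^z(x) = ρ_E(z − φ(x)) π(x) / ψ(π)(z). In other words, each iterate of Ψ is a smoothed (kernel-blurred) version of the true density ρ_X. -/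
open MeasureTheory

/-- Deconvolution form of the fixed-point map: if `ρ_Z = ψ(ρ_X)` is the
true marginal and `ψ π > 0` a.e., then for a.e. `x`,
`(Ψ π)(x) = ∫ ρ_X(x̃) G(x, x̃) dx̃` with the kernel
`G(x, x̃) = ∫ p_π^z(x) ρ_E(z − φ(x̃)) dz`, `p_π^z(x) = ρ_E(z − φ(x)) π(x) / ψ π (z)`,
i.e. each iterate of `Ψ` is a kernel-blurred version of the true density `ρ_X`. -/
theorem iteration_is_smoothed_true_density {d n : ℕ}
    (φ : (Fin d → ℝ) → (Fin n → ℝ)) (hφ : Measurable φ)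
    (ρE : (Fin n → ℝ) → ℝ) (hρE_meas : Measurable ρE)
    (hρE_nonneg : ∀ e, 0 ≤ ρE e) (hρE_int : (∫ e, ρE e) = 1)
    (ρX : (Fin d → ℝ) → ℝ) (hρX_meas : Measurable ρX)
    (hρX_nonneg : ∀ x, 0 ≤ ρX x) (hρX_int : (∫ x, ρX x) = 1)
    (ψ : ((Fin d → ℝ) → ℝ) → (Fin n → ℝ) → ℝ)
    (hψ : ∀ p z, ψ p z = ∫ x, ρE (z - φ x) * p x)
    (ρZ : (Fin n → ℝ) → ℝ) (hρZ_eq : ∀ z, ρZ z = ψ ρX z)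
    (π : (Fin d → ℝ) → ℝ) (hπ_meas : Measurable π)
    (hπ_nonneg : ∀ x, 0 ≤ π x) (hπ_int : (∫ x, π x) = 1)
    (hψπ_pos : ∀ᵐ z ∂(volume : Measure (Fin n → ℝ)), 0 < ψ π z)
    (hint : ∀ᵐ x ∂(volume : Measure (Fin d → ℝ)),
      Integrable (fun p : (Fin d → ℝ) × (Fin n → ℝ) =>
        ρX p.1 * ρE (p.2 - φ p.1) * ρE (p.2 - φ x) * π x / ψ π p.2))
    (Ψ : ((Fin d → ℝ) → ℝ) → (Fin d → ℝ) → ℝ)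
    (hΨ : ∀ p x, Ψ p x = ∫ z, (ρE (z - φ x) * p x / ψ p z) * ρZ z) :
    ∀ᵐ x ∂(volume : Measure (Fin d → ℝ)),
      Ψ π x = ∫ x', ρX x' * ∫ z, (ρE (z - φ x) * π x / ψ π z) * ρE (z - φ x') := by
  filter_upwards [hint] with x hx
  rw [hΨ]
  have h1 : ∀ z, (ρE (z - φ x) * π x / ψ π z) * ρZ z
      = ∫ x', ρX x' * ρE (z - φ x') * ρE (z - φ x) * π x / ψ π z := by
    intro z
    rw [hρZ_eq z, hψ ρX z, ← integral_const_mul]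
    congr 1; ext x'; ring
  calc ∫ z, (ρE (z - φ x) * π x / ψ π z) * ρZ z
      = ∫ z, ∫ x', ρX x' * ρE (z - φ x') * ρE (z - φ x) * π x / ψ π z := by
        simp only [h1]
    _ = ∫ x', ∫ z, ρX x' * ρE (z - φ x') * ρE (z - φ x) * π x / ψ π z :=
        (integral_integral_swap hx).symm
    _ = ∫ x', ρX x' * ∫ z, (ρE (z - φ x) * π x / ψ π z) * ρE (z - φ x') := by
        congr 1; ext x'
        rw [← integral_const_mul]
        congr 1; ext z; ring
end
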